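/- Let κ be an infinite regular cardinal and I a proper ideal on κ containing every bounded subset of κ. Suppose D ⊆ I⁺ is dense in I⁺ modulo bounded sets, i.e., for every Y ∈ I⁺ there is B ∈ D with B ∖ Y bounded. Then for every A ∈ I⁺, the set {B ∈ D : B ∖ A is bounded} has cardinality at least κ⁺. In particular, D itself has cardinality at least κ⁺. -/

import Mathlib

open Cardinal

/-- A subset of the ordinals below `κ` (realized as the type `κ.ord.ToType`)
is bounded if it is contained in a proper initial segment. -/
def Bdd {C : Type*} [Preorder C] (X : Set C) : Prop :=
  ∃ b : C, X ⊆ Set.Iio b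

set_option linter.deprecated false
set_option linter.unusedVariables false
set_option maxHeartbeats 1000000

noncomputable def seqU5 (step : Ordinal.{0} → Ordinal.{0}) (γ : Ordinal.{0}) : Ordinal.{0} :=
  step (Ordinal.blsub.{0,0} γ (fun β (hβ : β < γ) => seqU5 step β))
termination_by γ
decreasing_by exact hβ

noncomputable def seqS5 (step : Ordinal.{0} → Ordinal.{0}) (γ : Ordinal.{0}) : Ordinal.{0} :=
  Ordinal.blsub.{0,0} γ (fun β _ => seqU5 step β)

theorem seqU5_def (step : Ordinal → Ordinal) (γ : Ordinal) :
    seqU5 step γ = step (seqS5 step γ) := by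
  rw [seqU5, seqS5]

theorem seqU5_lt_seqS5 (step : Ordinal → Ordinal) {β γ : Ordinal} (h : β < γ) :
    seqU5 step β < seqS5 step γ :=
  Ordinal.lt_blsub _ β h

theorem seqS5_lt_seqU5 {step : Ordinal → Ordinal} (h : ∀ δ, δ < step δ) (γ : Ordinal) :
    seqS5 step γ < seqU5 step γ := by
  rw [seqU5_def]; exact h _

theorem seqU5_strictMono {step : Ordinal → Ordinal} (h : ∀ δ, δ < step δ) :
    StrictMono (seqU5 step) :=
  fun β γ hβγ => (seqU5_lt_seqS5 step hβγ).trans (seqS5_lt_seqU5 h γ)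

theorem le_seqS5 {step : Ordinal → Ordinal} (h : ∀ δ, δ < step δ) (γ : Ordinal) :
    γ ≤ seqS5 step γ := by
  by_contra hc
  push_neg at hc
  have h1 : seqU5 step (seqS5 step γ) < seqS5 step γ := by
    conv_rhs => rw [seqS5]
    exact Ordinal.lt_blsub _ _ hc
  exact absurd ((seqU5_strictMono h).le_apply.trans_lt h1) (lt_irrefl _)

theorem seqS5_lt_ord {κ : Cardinal.{0}} (hκreg : κ.IsRegular) {step : Ordinal → Ordinal}
    (h2 : ∀ δ < κ.ord, step δ < κ.ord) :
    ∀ γ < κ.ord, seqS5 step γ < κ.ord ∧ seqU5 step γ < κ.ord := by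
  intro γ
  induction γ using Ordinal.induction with
  | _ γ IH =>
    intro hγ
    have hS : seqS5 step γ < κ.ord :=
      Cardinal.blsub_lt_ord_of_isRegular hκreg (Cardinal.lt_ord.mp hγ)
        (fun β hβ => (IH β hβ (hβ.trans hγ)).2)
    exact ⟨hS, by rw [seqU5_def]; exact h2 _ hS⟩

theorem statement5 (κ : Cardinal.{0}) (hκreg : κ.IsRegular)
    (I : Set (Set κ.ord.ToType))
    (hdown : ∀ X Y : Set κ.ord.ToType, X ⊆ Y → Y ∈ I → X ∈ I)
    (hunion : ∀ X ∈ I, ∀ Y ∈ I, X ∪ Y ∈ I)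
    (hproper : (Set.univ : Set κ.ord.ToType) ∉ I)
    (hbdd : ∀ X : Set κ.ord.ToType, Bdd X → X ∈ I)
    (D : Set (Set κ.ord.ToType))
    (hDpos : ∀ X ∈ D, X ∉ I)
    (hdense : ∀ Y : Set κ.ord.ToType, Y ∉ I → ∃ B ∈ D, Bdd (B \ Y)) :
    (∀ A : Set κ.ord.ToType, A ∉ I →
      Order.succ κ ≤ #{B : Set κ.ord.ToType | B ∈ D ∧ Bdd (B \ A)}) ∧
    Order.succ κ ≤ #D := by
  classical
  have holim : Order.IsSuccLimit κ.ord := Cardinal.isSuccLimit_ord hκreg.aleph0_le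
  have hCne : Nonempty κ.ord.ToType :=
    Ordinal.nonempty_toType_iff.mpr holim.pos.ne'
  set e := Ordinal.ToType.mk (o := κ.ord) with he
  set rk : κ.ord.ToType → Ordinal := fun x => ((e.symm x : Set.Iio κ.ord) : Ordinal) with hrk
  have hrk_lt : ∀ x, rk x < κ.ord := fun x => (e.symm x).2
  set elt : Ordinal → κ.ord.ToType :=
    fun δ => if h : δ < κ.ord then e ⟨δ, h⟩ else Classical.arbitrary _ with helt
  have hrk_elt : ∀ {δ : Ordinal}, δ < κ.ord → rk (elt δ) = δ := by
    intro δ h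
    simp only [helt, dif_pos h, hrk, OrderIso.symm_apply_apply]
  have hlt_iff : ∀ {x y : κ.ord.ToType}, rk x < rk y ↔ x < y := by
    intro x y
    rw [hrk]
    rw [Subtype.coe_lt_coe, OrderIso.lt_iff_lt]
  have hle_iff : ∀ {x y : κ.ord.ToType}, rk x ≤ rk y ↔ x ≤ y := by
    intro x y
    rw [hrk]
    rw [Subtype.coe_le_coe, OrderIso.le_iff_le]
  have helt_rk : ∀ x, elt (rk x) = x := by
    intro x
    simp only [helt, hrk]
    have hx : ((e.symm x : Set.Iio κ.ord) : Ordinal) < κ.ord := (e.symm x).2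
    rw [dif_pos hx]
    exact e.apply_symm_apply x
  have hBdd_mono : ∀ {s t : Set κ.ord.ToType}, s ⊆ t → Bdd t → Bdd s := by
    rintro s t hsub ⟨b, hb⟩
    exact ⟨b, hsub.trans hb⟩
  have hunbdd : ∀ {s : Set κ.ord.ToType}, s ∉ I → ∀ b, ∃ x ∈ s, b < x := by
    intro s hs b
    by_contra hc
    push_neg at hc
    refine hs (hbdd s ⟨elt (Order.succ (rk b)), fun x hx => ?_⟩)
    have h1 : rk x ≤ rk b := hle_iff.mpr (hc x hx)
    have h2 : rk x < rk (elt (Order.succ (rk b))) := by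
      rw [hrk_elt (holim.succ_lt (hrk_lt b))]
      exact h1.trans_lt (Order.lt_succ _)
    exact hlt_iff.mp h2
  have key : ∀ A : Set κ.ord.ToType, A ∉ I →
      Order.succ κ ≤ #{B : Set κ.ord.ToType | B ∈ D ∧ Bdd (B \ A)} := by
    intro A hA
    by_contra hcon
    have hSκ : #{B : Set κ.ord.ToType | B ∈ D ∧ Bdd (B \ A)} ≤ κ :=
      le_of_not_gt (fun hlt => hcon (Order.succ_le_iff.mpr hlt))
    obtain ⟨B₀, hB₀D, hB₀A⟩ := hdense A hA
    have hle : #{B : Set κ.ord.ToType | B ∈ D ∧ Bdd (B \ A)} ≤ #κ.ord.ToType := by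
      rw [Cardinal.mk_ord_toType]; exact hSκ
    obtain ⟨emb⟩ := Cardinal.le_def _ _ |>.mp hle
    set S : Set (Set κ.ord.ToType) := {B : Set κ.ord.ToType | B ∈ D ∧ Bdd (B \ A)} with hS
    set f : κ.ord.ToType → Set κ.ord.ToType :=
      fun c => if h : ∃ s : S, emb s = c then (h.choose : Set κ.ord.ToType) else B₀ with hf
    have hfS : ∀ c, f c ∈ S := by
      intro c
      simp only [hf]
      split
      · exact Subtype.coe_prop _
      · exact ⟨hB₀D, hB₀A⟩
    have hfsurj : ∀ B ∈ S, ∃ c, f c = B := by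
      rintro B hB
      refine ⟨emb ⟨B, hB⟩, ?_⟩
      have hex : ∃ s : S, emb s = emb ⟨B, hB⟩ := ⟨⟨B, hB⟩, rfl⟩
      rw [hf]
      simp only [dif_pos hex]
      have := emb.injective hex.choose_spec
      rw [this]
    set T : κ.ord.ToType → Set κ.ord.ToType := fun c => f c ∩ A with hT
    have hTpos : ∀ c, T c ∉ I := by
      intro c hTc
      have h1 : f c \ A ∈ I := hbdd _ (hfS c).2
      have h2 : f c ⊆ T c ∪ (f c \ A) := by
        intro x hx
        by_cases hxA : x ∈ A
        · exact Or.inl ⟨hx, hxA⟩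
        · exact Or.inr ⟨hx, hxA⟩
      exact hDpos _ (hfS c).1 (hdown _ _ h2 (hunion _ hTc _ h1))
    have hTnxt : ∀ c b, ∃ x, x ∈ T c ∧ b < x := by
      intro c b; obtain ⟨x, h1, h2⟩ := hunbdd (hTpos c) b; exact ⟨x, h1, h2⟩
    choose nxt hnxt_mem hnxt_lt using hTnxt
    have hν' : ∀ b, ∃ b', b < b' ∧ ∀ c ≤ b, nxt c b < b' := by
      intro b
      have hsucc : Order.succ (rk b) < κ.ord := holim.succ_lt (hrk_lt b)
      have hcard : (Order.succ (rk b)).card < κ := Cardinal.lt_ord.mp hsucc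
      set L := Ordinal.blsub.{0,0} (Order.succ (rk b)) (fun δ _ => rk (nxt (elt δ) b) + 1) with hL
      have hL1 : L < κ.ord :=
        Cardinal.blsub_lt_ord_of_isRegular hκreg hcard
          (fun δ hδ => holim.succ_lt (hrk_lt _))
      have hmlt : max L (Order.succ (rk b)) < κ.ord := max_lt hL1 hsucc
      refine ⟨elt (max L (Order.succ (rk b))), ?_, ?_⟩
      · apply hlt_iff.mp
        rw [hrk_elt hmlt]
        exact lt_of_lt_of_le (Order.lt_succ _) (le_max_right _ _)
      · intro c hc
        apply hlt_iff.mp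
        rw [hrk_elt hmlt]
        have h1 : rk c < Order.succ (rk b) := (hle_iff.mpr hc).trans_lt (Order.lt_succ _)
        have h2 : rk (nxt (elt (rk c)) b) + 1 ≤ L := by
          rw [hL]
          exact (Ordinal.lt_blsub _ (rk c) h1).le
        rw [helt_rk c] at h2
        exact lt_of_lt_of_le ((Order.lt_succ _).trans_le h2) (le_max_left _ _)
    choose ν' hν'lt hν'nxt using hν'
    set step : Ordinal → Ordinal :=
      fun δ => if h : δ < κ.ord then rk (ν' (ν' (elt δ))) else δ + 1 with hstep
    have hstep_eq : ∀ {δ : Ordinal}, δ < κ.ord → step δ = rk (ν' (ν' (elt δ))) := by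
      intro δ h; rw [hstep]; simp only [dif_pos h]
    have hstep1 : ∀ δ, δ < step δ := by
      intro δ
      simp only [hstep]
      split
      · rename_i h
        calc δ = rk (elt δ) := (hrk_elt h).symm
        _ < rk (ν' (elt δ)) := hlt_iff.mpr (hν'lt _)
        _ < rk (ν' (ν' (elt δ))) := hlt_iff.mpr (hν'lt _)
      · exact Order.lt_succ _
    have hstep2 : ∀ δ, δ < κ.ord → step δ < κ.ord := by
      intro δ h; rw [hstep_eq h]; exact hrk_lt _
    set σ : Ordinal → Ordinal := seqS5 step with hσ
    have hσlt : ∀ {γ : Ordinal}, γ < κ.ord → σ γ < κ.ord :=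
      fun {γ} h => (seqS5_lt_ord hκreg hstep2 γ h).1
    set w : Ordinal → κ.ord.ToType := fun γ => ν' (elt (σ γ)) with hw
    set X : Set κ.ord.ToType := {x | ∃ γ, γ < κ.ord ∧ elt (σ γ) < x ∧ x ≤ w γ} with hX
    have hu_eq : ∀ {γ : Ordinal}, γ < κ.ord → seqU5 step γ = rk (ν' (w γ)) := by
      intro γ h
      rw [seqU5_def, hstep_eq (hσlt h)]
    -- per-(c, b) witnesses
    have hwit : ∀ c b, (∃ p, p ∈ T c ∧ p ∈ X ∧ b < p) ∧ (∃ q, q ∈ T c ∧ q ∉ X ∧ b < q) := by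
      intro c b
      set γ : Ordinal := max (rk c) (rk b) + 1 with hγdef
      have hγ : γ < κ.ord := holim.succ_lt (max_lt (hrk_lt c) (hrk_lt b))
      have hγσ : γ ≤ σ γ := le_seqS5 hstep1 γ
      have hcσ : rk c < σ γ :=
        lt_of_lt_of_le (lt_of_le_of_lt (le_max_left _ _) (Order.lt_succ _)) hγσ
      have hbσ : rk b < σ γ :=
        lt_of_lt_of_le (lt_of_le_of_lt (le_max_right _ _) (Order.lt_succ _)) hγσ
      have hce : c ≤ elt (σ γ) := by
        apply hle_iff.mp
        rw [hrk_elt (hσlt hγ)]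
        exact hcσ.le
      have hbe : b < elt (σ γ) := by
        apply hlt_iff.mp
        rw [hrk_elt (hσlt hγ)]
        exact hbσ
      have hew : elt (σ γ) < w γ := hν'lt _
      constructor
      · refine ⟨nxt c (elt (σ γ)), hnxt_mem _ _, ?_, ?_⟩
        · exact ⟨γ, hγ, hnxt_lt _ _, (hν'nxt _ c hce).le⟩
        · exact hbe.trans (hnxt_lt _ _)
      · refine ⟨nxt c (w γ), hnxt_mem _ _, ?_, ?_⟩
        · rintro ⟨γ', hγ', h1, h2⟩
          have hcw : c ≤ w γ := hce.trans hew.le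
          have hqu : rk (nxt c (w γ)) < seqU5 step γ := by
            rw [hu_eq hγ]
            exact hlt_iff.mpr (hν'nxt _ c hcw)
          rcases lt_trichotomy γ' γ with hlt | heq | hgt
          · -- γ' < γ : q ≤ w γ' has rank < seqU5 γ' < σ γ, but q > w γ > elt (σ γ) of rank σ γ
            have h3 : rk (nxt c (w γ)) ≤ rk (w γ') := hle_iff.mpr h2
            have h4 : rk (w γ') < seqU5 step γ' := by
              rw [hu_eq hγ']
              exact hlt_iff.mpr (hν'lt _)
            have h5 : seqU5 step γ' < σ γ := seqU5_lt_seqS5 step hlt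
            have h6 : rk (nxt c (w γ)) < σ γ := h3.trans_lt (h4.trans h5)
            have h7 : σ γ < rk (nxt c (w γ)) := by
              have := hlt_iff.mpr (hew.trans (hnxt_lt c (w γ)))
              rwa [hrk_elt (hσlt hγ)] at this
            exact absurd (h6.trans h7) (lt_irrefl _)
          · exact absurd h2 (not_le.mpr (heq ▸ hnxt_lt c (w γ)))
          · -- γ < γ' : rk q < seqU5 γ < σ γ', but q > elt (σ γ')
            have h5 : seqU5 step γ < σ γ' := seqU5_lt_seqS5 step hgt
            have h6 : rk (nxt c (w γ)) < σ γ' := hqu.trans h5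
            have h7 : σ γ' < rk (nxt c (w γ)) := by
              have := hlt_iff.mpr h1
              rwa [hrk_elt (hσlt hγ')] at this
            exact absurd (h6.trans h7) (lt_irrefl _)
        · exact hbe.trans (hew.trans (hnxt_lt _ _))
    -- one of A ∩ X, A \ X is positive
    have hnotboth : ¬(A ∩ X ∈ I ∧ A \ X ∈ I) := by
      rintro ⟨h1, h2⟩
      apply hA
      apply hdown A ((A ∩ X) ∪ (A \ X)) _ (hunion _ h1 _ h2)
      intro x hx
      by_cases hxX : x ∈ X
      · exact Or.inl ⟨hx, hxX⟩
      · exact Or.inr ⟨hx, hxX⟩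
    rcases not_and_or.mp hnotboth with hpos | hpos
    · obtain ⟨B, hBD, hBbdd⟩ := hdense _ hpos
      have hBS : B ∈ S := ⟨hBD, hBdd_mono (Set.diff_subset_diff_right Set.inter_subset_left) hBbdd⟩
      obtain ⟨c, hc⟩ := hfsurj B hBS
      have hsub : T c \ X ⊆ B \ (A ∩ X) := by
        rintro x ⟨⟨hx1, hx2⟩, hx3⟩
        exact ⟨hc ▸ hx1, fun h => hx3 h.2⟩
      obtain ⟨b, hb⟩ := hBdd_mono hsub hBbdd
      obtain ⟨q, hq1, hq2, hq3⟩ := (hwit c b).2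
      exact absurd (hb ⟨hq1, hq2⟩) (not_lt.mpr hq3.le)
    · obtain ⟨B, hBD, hBbdd⟩ := hdense _ hpos
      have hBS : B ∈ S := ⟨hBD, hBdd_mono (Set.diff_subset_diff_right Set.diff_subset) hBbdd⟩
      obtain ⟨c, hc⟩ := hfsurj B hBS
      have hsub : T c ∩ X ⊆ B \ (A \ X) := by
        rintro x ⟨⟨hx1, hx2⟩, hx3⟩
        exact ⟨hc ▸ hx1, fun h => h.2 hx3⟩
      obtain ⟨b, hb⟩ := hBdd_mono hsub hBbdd
      obtain ⟨p, hp1, hp2, hp3⟩ := (hwit c b).1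
      exact absurd (hb ⟨hp1, hp2⟩) (not_lt.mpr hp3.le)
  refine ⟨key, ?_⟩
  have h1 := key Set.univ hproper
  have hset : {B : Set κ.ord.ToType | B ∈ D ∧ Bdd (B \ Set.univ)} = D := by
    ext B
    simp only [Set.mem_setOf_eq, Set.diff_univ, and_iff_left_iff_imp]
    exact fun _ => ⟨Classical.arbitrary _, Set.empty_subset _⟩
  rwa [hset] at h1
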